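/- Let (K,D,⋆) be a compact probabilistic metric space with ⋆ continuous, (f_n) a sequence of probabilistic 1-Lipschitz maps, and f a probabilistic 1-Lipschitz map such that d_L(f_n(x), f(x)) → 0 for every x ∈ K. Then (f_n) converges uniformly to f: sup_{x∈K} d_L(f_n(x), f(x)) → 0. -/

import Mathlib

open Filter Topology

noncomputable section

/-- `Δ⁺`: distribution functions `F : [-∞,∞] → [0,1]`, nondecreasing, left-continuous
on `ℝ`, with `F(-∞)=0`, `F(+∞)=1` and `F(0)=0`. -/
def IsDistFun (F : EReal → ℝ) : Prop :=
  Monotone F ∧ (∀ t, F t ∈ Set.Icc (0:ℝ) 1) ∧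
  (∀ x : ℝ, ContinuousWithinAt F (Set.Iio (x : EReal)) (x : EReal)) ∧
  F ⊥ = 0 ∧ F ⊤ = 1 ∧ F (0 : EReal) = 0

/-- The step function `H_a`. -/
def Hstep (a : ℝ) : EReal → ℝ := fun t => if t ≤ (a : EReal) then 0 else 1

/-- `H₀`. -/
def H0 : EReal → ℝ := Hstep 0

/-- `H_∞`. -/
def Hinf : EReal → ℝ := fun t => if t = ⊤ then 1 else 0

/-- The condition `A(F,G;h)` : for all `t ∈ (0,1/h)`, `G(t) ≤ F(t+h)+h`. -/
def levyCond (F G : EReal → ℝ) (h : ℝ) : Prop :=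
  ∀ t : ℝ, 0 < t → t < 1 / h → G (t : EReal) ≤ F ((t + h : ℝ) : EReal) + h

def levySet (F G : EReal → ℝ) : Set ℝ :=
  {h : ℝ | 0 < h ∧ h ≤ 1 ∧ levyCond F G h ∧ levyCond G F h}

/-- The modified Lévy distance. -/
def dL (F G : EReal → ℝ) : ℝ := sInf (levySet F G)

/-- Weak convergence: pointwise convergence at each (real) continuity point of the limit. -/
def WeakConv (F : ℕ → EReal → ℝ) (G : EReal → ℝ) : Prop :=
  ∀ t : ℝ, ContinuousAt G (t : EReal) →
    Tendsto (fun n => F n (t : EReal)) atTop (𝓝 (G (t : EReal)))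

abbrev TriOp := (EReal → ℝ) → (EReal → ℝ) → (EReal → ℝ)

/-- A triangle function on `Δ⁺`. -/
def IsTriangleFn (star : TriOp) : Prop :=
  (∀ F L, IsDistFun F → IsDistFun L → IsDistFun (star F L)) ∧
  (∀ F L, IsDistFun F → IsDistFun L → star F L = star L F) ∧
  (∀ F L K, IsDistFun F → IsDistFun L → IsDistFun K →
    star F (star L K) = star (star F L) K) ∧
  (∀ F, IsDistFun F → star F H0 = F) ∧
  (∀ F L K, IsDistFun F → IsDistFun L → IsDistFun K → F ≤ L → star F K ≤ star L K)

/-- `⋆` is continuous with respect to weak convergence. -/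
def StarContinuous (star : TriOp) : Prop :=
  ∀ (Fn Ln : ℕ → EReal → ℝ) (F L : EReal → ℝ),
    (∀ n, IsDistFun (Fn n)) → (∀ n, IsDistFun (Ln n)) →
    IsDistFun F → IsDistFun L →
    WeakConv Fn F → WeakConv Ln L →
    WeakConv (fun n => star (Fn n) (Ln n)) (star F L)

/-- `⋆` is sup-continuous. -/
def StarSupContinuous (star : TriOp) : Prop :=
  ∀ (I : Type) (_ : Nonempty I) (F : I → EReal → ℝ) (L : EReal → ℝ),
    (∀ i, IsDistFun (F i)) → IsDistFun L →
    (fun t => ⨆ i, star (F i) L t) = star (fun t => ⨆ i, F i t) L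

/-- A probabilistic metric space `(G, D, ⋆)`. -/
structure PMSpace (G : Type) where
  star : TriOp
  D : G → G → EReal → ℝ
  star_tri : IsTriangleFn star
  D_mem : ∀ p q, IsDistFun (D p q)
  D_eq_iff : ∀ p q, D p q = H0 ↔ p = q
  D_symm : ∀ p q, D p q = D q p
  D_tri : ∀ p q r, star (D p q) (D q r) ≤ D p r

/-- Probabilistic 1-Lipschitz map. -/
def PLip {G : Type} (M : PMSpace G) (f : G → EReal → ℝ) : Prop :=
  (∀ x, IsDistFun (f x)) ∧ ∀ x y, M.star (M.D x y) (f y) ≤ f x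

/-- Probabilistically continuous map. -/
def PCont {G : Type} (M : PMSpace G) (f : G → EReal → ℝ) : Prop :=
  (∀ x, IsDistFun (f x)) ∧
  ∀ (z : G) (zn : ℕ → G),
    WeakConv (fun n => M.D (zn n) z) H0 →
    WeakConv (fun n => f (zn n)) (f z)

/-- The uniform modified Lévy distance `d_∞`. -/
def dInf {G : Type} (f g : G → EReal → ℝ) : ℝ := ⨆ x, dL (f x) (g x)

/-- Probabilistic Cauchy sequence: `D(z_n,z_p)(t) → H₀(t)` for all real `t`. -/
def PCauchy {G : Type} (M : PMSpace G) (z : ℕ → G) : Prop :=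
  ∀ t : ℝ, Tendsto (fun np : ℕ × ℕ => M.D (z np.1) (z np.2) (t : EReal))
    atTop (𝓝 (H0 (t : EReal)))

def PConvTo {G : Type} (M : PMSpace G) (z : ℕ → G) (w : G) : Prop :=
  ∀ t : ℝ, Tendsto (fun n => M.D (z n) w (t : EReal)) atTop (𝓝 (H0 (t : EReal)))

def PComplete {G : Type} (M : PMSpace G) : Prop :=
  ∀ z : ℕ → G, PCauchy M z → ∃ w, PConvTo M z w

/-- Compactness: complete and every strong `t`-neighborhood cover has a finite subcover. -/
def PCompact {G : Type} (M : PMSpace G) : Prop :=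
  PComplete M ∧ ∀ t : ℝ, 0 < t → ∃ A : Finset G, ∀ x : G, ∃ a ∈ A, M.D a x (t : EReal) > 1 - t

-- AUX START
-- basic lemmas
lemma IsDistFun.nonneg {F : EReal → ℝ} (hF : IsDistFun F) (t : EReal) : 0 ≤ F t :=
  (hF.2.1 t).1

lemma IsDistFun.le_one {F : EReal → ℝ} (hF : IsDistFun F) (t : EReal) : F t ≤ 1 :=
  (hF.2.1 t).2

lemma IsDistFun.mono {F : EReal → ℝ} (hF : IsDistFun F) : Monotone F := hF.1

lemma IsDistFun.eq_zero_of_nonpos {F : EReal → ℝ} (hF : IsDistFun F) {t : EReal}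
    (ht : t ≤ 0) : F t = 0 :=
  le_antisymm (hF.2.2.2.2.2 ▸ hF.1 ht) (hF.nonneg t)

lemma H0_isDistFun : IsDistFun H0 := by
  constructor
  · intro s t hst
    simp only [H0, Hstep]
    by_cases h2 : t ≤ ((0:ℝ):EReal)
    · rw [if_pos h2, if_pos (hst.trans h2)]
    · rw [if_neg h2]
      split_ifs <;> norm_num
  refine ⟨fun t => ?_, fun x => ?_, by simp [H0, Hstep], by simp [H0, Hstep], by simp [H0, Hstep]⟩
  · simp only [H0, Hstep]; split <;> norm_num
  · by_cases hx : x ≤ 0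
    · have hval : ∀ t ∈ Set.Iio ((x:ℝ):EReal), H0 t = 0 := by
        intro t ht
        simp only [Set.mem_Iio] at ht
        simp only [H0, Hstep]
        rw [if_pos (le_of_lt (lt_of_lt_of_le ht (EReal.coe_le_coe_iff.2 hx)))]
      have hx0 : H0 (x:EReal) = 0 := by
        simp only [H0, Hstep]
        rw [if_pos (EReal.coe_le_coe_iff.2 hx)]
      rw [ContinuousWithinAt, hx0]
      refine tendsto_nhdsWithin_congr (fun t ht => (hval t ht).symm) tendsto_const_nhds
    · push_neg at hx
      have hval : ∀ t ∈ Set.Ioo ((0:ℝ):EReal) ((x:ℝ):EReal), H0 t = 1 := by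
        intro t ht
        simp only [H0, Hstep, if_neg (not_le.2 ht.1)]
      have hx1 : H0 (x:EReal) = 1 := by
        simp only [H0, Hstep]
        rw [if_neg (not_le.2 (EReal.coe_lt_coe_iff.2 hx))]
      rw [ContinuousWithinAt, hx1]
      have hmem : Set.Ioo ((0:ℝ):EReal) ((x:ℝ):EReal) ∈ 𝓝[<] ((x:ℝ):EReal) :=
        Ioo_mem_nhdsLT_of_mem ⟨EReal.coe_lt_coe_iff.2 hx, le_refl _⟩
      refine Tendsto.congr' ?_ tendsto_const_nhds
      filter_upwards [hmem] with t ht using (hval t ht).symm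

lemma one_mem_levySet {F G : EReal → ℝ} (hF : IsDistFun F) (hG : IsDistFun G) :
    (1:ℝ) ∈ levySet F G := by
  refine ⟨one_pos, le_refl _, ?_, ?_⟩ <;>
  · intro t ht ht'
    have := hF.nonneg ((t+1:ℝ):EReal)
    have := hG.nonneg ((t+1:ℝ):EReal)
    have := hF.le_one ((t:ℝ):EReal)
    have := hG.le_one ((t:ℝ):EReal)
    linarith

lemma levySet_bddBelow (F G : EReal → ℝ) : BddBelow (levySet F G) :=
  ⟨0, fun h hh => hh.1.le⟩

lemma dL_nonneg {F G : EReal → ℝ} : 0 ≤ dL F G := by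
  by_cases hne : (levySet F G).Nonempty
  · exact le_csInf hne (fun h hh => hh.1.le)
  · simp [dL, Set.not_nonempty_iff_eq_empty.1 hne, Real.sInf_empty]

lemma dL_le_of_mem {F G : EReal → ℝ} {h : ℝ} (hh : h ∈ levySet F G) : dL F G ≤ h :=
  csInf_le (levySet_bddBelow F G) hh

lemma dL_le_one {F G : EReal → ℝ} (hF : IsDistFun F) (hG : IsDistFun G) : dL F G ≤ 1 :=
  dL_le_of_mem (one_mem_levySet hF hG)

lemma exists_levySet_lt {F G : EReal → ℝ} (hF : IsDistFun F) (hG : IsDistFun G) {h : ℝ}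
    (hh : dL F G < h) : ∃ h' ∈ levySet F G, h' < h :=
  exists_lt_of_csInf_lt ⟨1, one_mem_levySet hF hG⟩ hh

lemma levySet_symm {F G : EReal → ℝ} {h : ℝ} (hh : h ∈ levySet F G) : h ∈ levySet G F :=
  ⟨hh.1, hh.2.1, hh.2.2.2, hh.2.2.1⟩

lemma dL_symm (F G : EReal → ℝ) : dL F G = dL G F := by
  unfold dL
  congr 1
  ext h
  exact ⟨levySet_symm, levySet_symm⟩

lemma levyCond_comp {F G H : EReal → ℝ} {h1 h2 : ℝ} (h1p : 0 < h1) (h2p : 0 < h2)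
    (hsum : h1 + h2 ≤ 1) (hFG : levyCond F G h1) (hGH : levyCond G H h2) :
    levyCond F H (h1 + h2) := by
  intro t ht ht'
  have htsum : t * (h1 + h2) < 1 := (lt_div_iff₀ (by positivity)).1 ht'
  have h2le : t < 1 / h2 := by
    rw [lt_div_iff₀ h2p]; nlinarith
  have hstep1 : H (t : EReal) ≤ G ((t + h2 : ℝ) : EReal) + h2 := hGH t ht h2le
  have h1le : t + h2 < 1 / h1 := by
    rw [lt_div_iff₀ h1p]
    rcases le_or_gt h1 t with hc | hc
    · have : h1 * h2 ≤ t * h2 := mul_le_mul_of_nonneg_right hc h2p.le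
      nlinarith
    · nlinarith [mul_lt_mul_of_pos_right (add_lt_add_left hc h2) h1p,
        mul_le_mul_of_nonneg_right hsum h1p.le]
  have hstep2 : G ((t + h2 : ℝ) : EReal) ≤ F ((t + h2 + h1 : ℝ) : EReal) + h1 :=
    hFG (t + h2) (by linarith) h1le
  rw [show (t + h2 + h1 : ℝ) = t + (h1 + h2) by ring] at hstep2
  linarith

lemma levySet_comp {F G H : EReal → ℝ} {h1 h2 : ℝ} (h1m : h1 ∈ levySet F G)
    (h2m : h2 ∈ levySet G H) (hsum : h1 + h2 ≤ 1) : h1 + h2 ∈ levySet F H := by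
  refine ⟨by linarith [h1m.1, h2m.1], hsum, levyCond_comp h1m.1 h2m.1 hsum h1m.2.2.1 h2m.2.2.1, ?_⟩
  rw [add_comm]
  exact levyCond_comp h2m.1 h1m.1 (by linarith) h2m.2.2.2 h1m.2.2.2

lemma dL_triangle {F G H : EReal → ℝ} (hF : IsDistFun F) (hG : IsDistFun G)
    (hH : IsDistFun H) : dL F H ≤ dL F G + dL G H := by
  by_contra hcon
  push_neg at hcon
  set ε := (dL F H - (dL F G + dL G H)) / 3 with hε
  have hεpos : 0 < ε := by simp only [hε]; linarith
  obtain ⟨h1, h1m, h1lt⟩ := exists_levySet_lt hF hG (lt_add_of_pos_right _ hεpos)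
  obtain ⟨h2, h2m, h2lt⟩ := exists_levySet_lt hG hH (lt_add_of_pos_right _ hεpos)
  by_cases hsum : h1 + h2 ≤ 1
  · have := dL_le_of_mem (levySet_comp h1m h2m hsum)
    linarith
  · have := dL_le_one hF hH
    linarith [h1m.1, h2m.1]

noncomputable def stepOf (c : ℝ) (m : ℕ) (w : Fin (m+1) → ℕ) : EReal → ℝ :=
  fun t => if t = ⊤ then 1 else
    Finset.univ.sup' Finset.univ_nonempty
      (fun i : Fin (m+1) => if (((i:ℕ) * c : ℝ) : EReal) < t then min (c * w i) 1 else 0)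

section stepOfSec
variable {c : ℝ} {m : ℕ} {w : Fin (m+1) → ℕ}

lemma stepOf_term_nonneg (hc : 0 < c) (i : Fin (m+1)) (t : EReal) :
    (0:ℝ) ≤ (if (((i:ℕ) * c : ℝ) : EReal) < t then min (c * w i) 1 else 0) := by
  split
  · exact le_min (by positivity) one_pos.le
  · exact le_refl _

lemma stepOf_nonneg (hc : 0 < c) (t : EReal) : 0 ≤ stepOf c m w t := by
  unfold stepOf
  split
  · norm_num
  · exact Finset.le_sup'_of_le _ (Finset.mem_univ 0) (stepOf_term_nonneg hc 0 t)

lemma stepOf_le_one (hc : 0 < c) (t : EReal) : stepOf c m w t ≤ 1 := by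
  unfold stepOf
  split
  · norm_num
  · refine Finset.sup'_le _ _ (fun i _ => ?_)
    split
    · exact min_le_right _ _
    · norm_num

lemma stepOf_mono (hc : 0 < c) : Monotone (stepOf c m w) := by
  intro s t hst
  by_cases ht : t = ⊤
  · subst ht
    have h1 : stepOf c m w ⊤ = 1 := by simp only [stepOf, if_true]
    rw [h1]
    exact stepOf_le_one hc s
  · have hs : s ≠ ⊤ := fun h => ht (top_le_iff.1 (h ▸ hst))
    simp only [stepOf, if_neg ht, if_neg hs]
    refine Finset.sup'_le _ _ (fun i _ => ?_)
    refine Finset.le_sup'_of_le _ (Finset.mem_univ i) ?_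
    by_cases hi : (((i:ℕ) * c : ℝ) : EReal) < s
    · rw [if_pos hi, if_pos (hi.trans_le hst)]
    · rw [if_neg hi]
      exact stepOf_term_nonneg hc i t

lemma stepOf_isDistFun (hc : 0 < c) : IsDistFun (stepOf c m w) := by
  refine ⟨stepOf_mono hc, fun t => ⟨stepOf_nonneg hc t, stepOf_le_one hc t⟩, ?_, ?_, ?_, ?_⟩
  · intro x
    -- locally constant to the left of x
    set x' : ℝ := Finset.univ.sup' Finset.univ_nonempty
      (fun i : Fin (m+1) => if ((i:ℕ) * c : ℝ) < x then (i:ℕ) * c else x - 1) with hx'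
    have hx'lt : x' < x := by
      rw [hx']
      refine (Finset.sup'_lt_iff _).2 (fun i _ => ?_)
      split
      · assumption
      · linarith
    have hconst : ∀ t ∈ Set.Ioc ((x':ℝ):EReal) ((x:ℝ):EReal), stepOf c m w t = stepOf c m w x := by
      intro t ht
      have htne : t ≠ ⊤ := by
        intro h
        have h2 := ht.2
        rw [h] at h2
        exact (not_le.2 (EReal.coe_lt_top x)) h2
      simp only [stepOf, if_neg htne, if_neg (EReal.coe_ne_top x)]
      congr 1
      ext i
      by_cases hi : ((i:ℕ) * c : ℝ) < x
      · have hr : ((i:ℕ) * c : ℝ) ≤ x' := by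
          rw [hx']
          exact Finset.le_sup'_of_le _ (Finset.mem_univ i) (le_of_eq (if_pos hi).symm)
        have h1 : (((i:ℕ) * c : ℝ) : EReal) < t :=
          lt_of_le_of_lt (by exact_mod_cast hr) ht.1
        rw [if_pos h1, if_pos (by exact_mod_cast hi)]
      · have h1 : ¬ (((i:ℕ) * c : ℝ) : EReal) < t := by
          push_neg at hi ⊢
          exact ht.2.trans (by exact_mod_cast hi)
        rw [if_neg h1, if_neg (by exact_mod_cast hi)]
    rw [ContinuousWithinAt]
    refine Tendsto.congr' ?_ tendsto_const_nhds
    have hmem : Set.Ioo ((x':ℝ):EReal) ((x:ℝ):EReal) ∈ 𝓝[<] ((x:ℝ):EReal) :=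
      Ioo_mem_nhdsLT_of_mem ⟨by exact_mod_cast hx'lt, le_refl _⟩
    filter_upwards [hmem] with t ht
    exact (hconst t ⟨ht.1, ht.2.le⟩).symm
  · simp only [stepOf, if_neg bot_ne_top]
    refine le_antisymm (Finset.sup'_le _ _ (fun i _ => ?_))
      (Finset.le_sup'_of_le _ (Finset.mem_univ 0) (le_of_eq ?_))
    · rw [if_neg (by simp)]
    · rw [if_neg (by simp)]
  · simp only [stepOf, if_true]
  · simp only [stepOf, if_neg (show (0:EReal) ≠ ⊤ by simp)]
    refine le_antisymm (Finset.sup'_le _ _ (fun i _ => ?_))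
      (Finset.le_sup'_of_le _ (Finset.mem_univ 0) (le_of_eq ?_))
    · rw [if_neg (by
        refine not_lt.2 ?_
        exact_mod_cast (by positivity : (0:ℝ) ≤ (i:ℕ) * c))]
    · rw [if_neg (by
        refine not_lt.2 ?_
        exact_mod_cast (by positivity : (0:ℝ) ≤ ((0:Fin (m+1)):ℕ) * c))]

lemma stepOf_le {L : EReal → ℝ} (hL : IsDistFun L) (hc : 0 < c)
    (hw : ∀ i : Fin (m+1), c * w i ≤ L (((i:ℕ) * c : ℝ) : EReal)) :
    stepOf c m w ≤ L := by
  intro t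
  unfold stepOf
  split
  · next h => rw [h, hL.2.2.2.2.1]
  · refine Finset.sup'_le _ _ (fun i _ => ?_)
    split
    · next hi => exact (min_le_left _ _).trans ((hw i).trans (hL.1 hi.le))
    · exact (hL.2.1 t).1

lemma le_stepOf_add {L : EReal → ℝ} (hL : IsDistFun L) (hc : 0 < c)
    (hw : ∀ i : Fin (m+1), L (((i:ℕ) * c : ℝ) : EReal) ≤ min (c * w i) 1 + c)
    {t : ℝ} (ht : 0 < t) (htm : t ≤ m * c) :
    L ((t : ℝ) : EReal) ≤ stepOf c m w ((t + c : ℝ) : EReal) + c := by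
  set j : ℕ := ⌈t / c⌉₊ with hj
  have hjm : j ≤ m := Nat.ceil_le.2 (by rw [div_le_iff₀ hc]; linarith [htm])
  have hjt : t ≤ j * c := by
    rw [← div_le_iff₀ hc]
    exact Nat.le_ceil _
  have hjlt : (j : ℝ) * c < t + c := by
    have h1 : (j : ℝ) < t / c + 1 := Nat.ceil_lt_add_one (by positivity)
    calc (j:ℝ) * c < (t/c+1) * c := by exact mul_lt_mul_of_pos_right h1 hc
      _ = t + c := by field_simp
  set i : Fin (m+1) := ⟨j, Nat.lt_succ_of_le hjm⟩ with hi
  have hstep : min (c * w i) 1 ≤ stepOf c m w ((t + c : ℝ) : EReal) := by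
    unfold stepOf
    rw [if_neg (EReal.coe_ne_top _)]
    refine Finset.le_sup'_of_le _ (Finset.mem_univ i) ?_
    rw [if_pos (by exact_mod_cast hjlt)]
  have := hw i
  have hLt : L ((t:ℝ):EReal) ≤ L (((i:ℕ) * c : ℝ):EReal) := hL.1 (by exact_mod_cast hjt)
  simp only [hi] at this hLt
  linarith [hstep, this, hLt]
end stepOfSec

-- AUX END

lemma lemA {star : TriOp} (htri : IsTriangleFn star) (hsc : StarContinuous star)
    {L : EReal → ℝ} (hL : IsDistFun L) {ε : ℝ} (hε : 0 < ε) :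
    ∃ δ : ℝ, 0 < δ ∧ ∀ F : EReal → ℝ, IsDistFun F → 1 - δ < F ((δ:ℝ):EReal) →
      ∀ t : ℝ, 0 < t → t < 1/ε → L (t:EReal) ≤ star F L ((t+ε:ℝ):EReal) + ε := by
  by_contra hcon
  push_neg at hcon
  have hstep : ∀ n : ℕ, ∃ F : EReal → ℝ, ∃ t : ℝ, IsDistFun F ∧
      1 - 1/((n:ℝ)+1) < F ((1/((n:ℝ)+1) : ℝ):EReal) ∧
      0 < t ∧ t < 1/ε ∧ star F L ((t+ε:ℝ):EReal) + ε < L (t:EReal) := by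
    intro n
    obtain ⟨F, hF1, hF2, t, ht1, ht2, ht3⟩ := hcon (1/((n:ℝ)+1)) (by positivity)
    exact ⟨F, t, hF1, hF2, ht1, ht2, ht3⟩
  choose F t hFdist hFδ ht0 ht1 htbad using hstep
  have hweak : WeakConv F H0 := by
    intro s _
    by_cases hs0 : s ≤ 0
    · have hcoe : ((s:ℝ):EReal) ≤ (0:EReal) := by exact_mod_cast hs0
      have hz : ∀ n, F n (s:EReal) = 0 := fun n => (hFdist n).eq_zero_of_nonpos hcoe
      have hH : H0 ((s:ℝ):EReal) = 0 := by
        simp only [H0, Hstep]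
        rw [if_pos (by exact_mod_cast hs0)]
      rw [hH]
      exact tendsto_const_nhds.congr (fun n => (hz n).symm)
    · push_neg at hs0
      have hH : H0 ((s:ℝ):EReal) = 1 := by
        simp only [H0, Hstep]
        rw [if_neg (not_le.2 (by exact_mod_cast hs0))]
      rw [hH]
      have hlow : Tendsto (fun n : ℕ => 1 - 1/((n:ℝ)+1)) atTop (𝓝 1) := by
        have h1 := tendsto_one_div_add_atTop_nhds_zero_nat (𝕜 := ℝ)
        have h2 : Tendsto (fun n : ℕ => (1:ℝ) - 1/((n:ℝ)+1)) atTop (𝓝 (1 - 0)) :=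
          Tendsto.sub tendsto_const_nhds h1
        simpa using h2
      refine tendsto_of_tendsto_of_tendsto_of_le_of_le' hlow tendsto_const_nhds ?_ ?_
      · refine Filter.eventually_atTop.2 ⟨⌈1/s⌉₊, fun n hn => ?_⟩
        have h1 : (1:ℝ)/s ≤ (n:ℝ)+1 := by
          calc (1:ℝ)/s ≤ (⌈1/s⌉₊:ℝ) := Nat.le_ceil _
            _ ≤ (n:ℝ) := by exact_mod_cast hn
            _ ≤ (n:ℝ)+1 := by linarith
        have h2 : 1/((n:ℝ)+1) ≤ s := by
          rw [div_le_iff₀ (by positivity)]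
          rw [div_le_iff₀ hs0] at h1
          linarith
        calc 1 - 1/((n:ℝ)+1) ≤ F n ((1/((n:ℝ)+1) : ℝ):EReal) := (hFδ n).le
          _ ≤ F n ((s:ℝ):EReal) := (hFdist n).1 (by exact_mod_cast h2)
      · exact Filter.Eventually.of_forall (fun n => (hFdist n).le_one _)
  have hid : star H0 L = L := (htri.2.1 H0 L H0_isDistFun hL).trans (htri.2.2.2.1 L hL)
  have hwc : WeakConv (fun n => star (F n) L) L := by
    have := hsc F (fun _ => L) H0 L hFdist (fun _ => hL) H0_isDistFun hL hweak
      (fun s _ => tendsto_const_nhds)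
    rwa [hid] at this
  have hmem : ∀ n, t n ∈ Set.Icc 0 (1/ε) := fun n => ⟨(ht0 n).le, (ht1 n).le⟩
  obtain ⟨tstar, htstar, φ, hφ, hconv⟩ := isCompact_Icc.tendsto_subseq hmem
  have hcount : Set.Countable {x : EReal | ¬ContinuousAt L x} :=
    hL.1.countable_not_continuousAt
  have hcount2 : Set.Countable {u : ℝ | ¬ContinuousAt L ((u:ℝ):EReal)} :=
    hcount.preimage EReal.coe_injective
  have hnsub : ¬ (Set.Ioo tstar (tstar+ε) ⊆ {u : ℝ | ¬ContinuousAt L ((u:ℝ):EReal)}) := by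
    intro hsub
    have h0 := MeasureTheory.measure_mono_null hsub (hcount2.measure_zero MeasureTheory.volume)
    rw [Real.volume_Ioo] at h0
    simp only [ENNReal.ofReal_eq_zero] at h0
    linarith
  obtain ⟨u, hu, hubad⟩ := Set.not_subset.1 hnsub
  have hucont : ContinuousAt L ((u:ℝ):EReal) := not_not.1 hubad
  have hev1 : ∀ᶠ n in atTop, t (φ n) < u := hconv.eventually (eventually_lt_nhds hu.1)
  have hev2 : ∀ᶠ n in atTop, u - ε < t (φ n) :=
    hconv.eventually (eventually_gt_nhds (by linarith [hu.2]))
  have hlim : Tendsto (fun n => star (F (φ n)) L ((u:ℝ):EReal)) atTop (𝓝 (L ((u:ℝ):EReal))) :=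
    (hwc u hucont).comp hφ.tendsto_atTop
  have key : ∀ᶠ n in atTop, star (F (φ n)) L ((u:ℝ):EReal) ≤ L ((u:ℝ):EReal) - ε := by
    filter_upwards [hev1, hev2] with n h1 h2
    have hb := htbad (φ n)
    have hm1 : L ((t (φ n) : ℝ):EReal) ≤ L ((u:ℝ):EReal) :=
      hL.1 (EReal.coe_le_coe_iff.2 h1.le)
    have hsd : IsDistFun (star (F (φ n)) L) := htri.1 _ _ (hFdist (φ n)) hL
    have hm2 : star (F (φ n)) L ((u:ℝ):EReal) ≤ star (F (φ n)) L ((t (φ n)+ε:ℝ):EReal) :=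
      hsd.1 (EReal.coe_le_coe_iff.2 (by linarith))
    linarith
  have hfin := le_of_tendsto hlim key
  linarith

lemma lemA_uniform {star : TriOp} (htri : IsTriangleFn star) (hsc : StarContinuous star)
    {ε : ℝ} (hε0 : 0 < ε) (hε1 : ε < 1) :
    ∃ δ : ℝ, 0 < δ ∧ ∀ F : EReal → ℝ, IsDistFun F → 1 - δ < F ((δ:ℝ):EReal) →
      ∀ L : EReal → ℝ, IsDistFun L →
      ∀ t : ℝ, 0 < t → t < 1/ε → L (t:EReal) ≤ star F L ((t+ε:ℝ):EReal) + ε := by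
  set c := ε/2 with hcdef
  have hcpos : 0 < c := by positivity
  set m := ⌈2/ε^2⌉₊ with hmdef
  set k := ⌊1/c⌋₊ with hkdef
  have hchoice : ∀ v : (Fin (m+1) → Fin (k+1)), ∃ δ : ℝ, 0 < δ ∧
      ∀ F : EReal → ℝ, IsDistFun F → 1 - δ < F ((δ:ℝ):EReal) →
      ∀ t : ℝ, 0 < t → t < 1/c →
        stepOf c m (fun i => (v i : ℕ)) (t:EReal) ≤
          star F (stepOf c m (fun i => (v i : ℕ))) ((t+c:ℝ):EReal) + c :=
    fun v => lemA htri hsc (stepOf_isDistFun hcpos) hcpos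
  choose δf hδfpos hδfP using hchoice
  have hne : (Finset.univ : Finset (Fin (m+1) → Fin (k+1))).Nonempty := Finset.univ_nonempty
  set δ := Finset.univ.inf' hne δf with hδdef
  refine ⟨δ, ?_, ?_⟩
  · rw [hδdef, Finset.lt_inf'_iff]
    exact fun v _ => hδfpos v
  intro Fd hF hFδ L hL t ht htε
  have hfloor_le : ∀ i : Fin (m+1), ⌊L (((i:ℕ)*c : ℝ):EReal) / c⌋₊ ≤ k := by
    intro i
    rw [hkdef]
    refine Nat.floor_le_floor ?_
    gcongr
    exact hL.le_one _
  set v : Fin (m+1) → Fin (k+1) :=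
    fun i => ⟨⌊L (((i:ℕ)*c:ℝ):EReal) / c⌋₊, Nat.lt_succ_of_le (hfloor_le i)⟩ with hvdef
  set S := stepOf c m (fun i => (v i : ℕ)) with hSdef
  have hS : IsDistFun S := stepOf_isDistFun hcpos
  have hw1 : ∀ i : Fin (m+1), c * ((v i : ℕ):ℝ) ≤ L (((i:ℕ)*c:ℝ):EReal) := by
    intro i
    have hx0 : 0 ≤ L (((i:ℕ)*c:ℝ):EReal) := hL.nonneg _
    have h1 : ((v i : ℕ):ℝ) ≤ L (((i:ℕ)*c:ℝ):EReal) / c := by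
      simp only [hvdef]
      exact Nat.floor_le (by positivity)
    calc c * ((v i : ℕ):ℝ) ≤ c * (L (((i:ℕ)*c:ℝ):EReal) / c) :=
          mul_le_mul_of_nonneg_left h1 hcpos.le
      _ = L (((i:ℕ)*c:ℝ):EReal) := by field_simp
  have hSle : S ≤ L := stepOf_le hL hcpos hw1
  have hw2 : ∀ i : Fin (m+1), L (((i:ℕ)*c:ℝ):EReal) ≤ min (c * ((v i : ℕ):ℝ)) 1 + c := by
    intro i
    have ha : L (((i:ℕ)*c:ℝ):EReal) ≤ c * ((v i : ℕ):ℝ) + c := by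
      have h1 : L (((i:ℕ)*c:ℝ):EReal) / c < ((v i : ℕ):ℝ) + 1 := by
        have h0 := Nat.lt_floor_add_one (L (((i:ℕ)*c:ℝ):EReal) / c)
        have hval : ((v i : ℕ):ℝ) = ((⌊L (((i:ℕ)*c:ℝ):EReal) / c⌋₊ : ℕ):ℝ) := by
          simp [hvdef]
        rw [hval]
        exact h0
      have h2 := mul_lt_mul_of_pos_left h1 hcpos
      rw [mul_div_cancel₀ _ hcpos.ne'] at h2
      linarith [h2]
    have hb : L (((i:ℕ)*c:ℝ):EReal) ≤ 1 + c := by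
      linarith [hL.le_one (((i:ℕ)*c:ℝ):EReal), hcpos]
    rcases min_cases (c * ((v i : ℕ):ℝ)) 1 with ⟨hmin, _⟩ | ⟨hmin, _⟩ <;> rw [hmin] <;> linarith
  have htm : t ≤ (m:ℝ) * c := by
    have h1 : (2/ε^2 : ℝ) ≤ (m:ℝ) := by rw [hmdef]; exact Nat.le_ceil _
    have h2 : (2/ε^2 : ℝ) * c ≤ (m:ℝ) * c := mul_le_mul_of_nonneg_right h1 hcpos.le
    have h3 : (2/ε^2 : ℝ) * c = 1/ε := by rw [hcdef]; field_simp
    linarith [htε]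
  have hbrack : L ((t:ℝ):EReal) ≤ S ((t+c:ℝ):EReal) + c := le_stepOf_add hL hcpos hw2 ht htm
  have hFδf : 1 - δf v < Fd ((δf v : ℝ):EReal) := by
    have hle : δ ≤ δf v := Finset.inf'_le _ (Finset.mem_univ v)
    have := hF.1 (EReal.coe_le_coe_iff.2 hle)
    linarith [hFδ, this]
  have htc : t + c < 1/c := by
    have h1 : c ≤ 1/ε := by
      rw [hcdef, div_le_div_iff₀ (by norm_num) hε0]
      nlinarith
    have h2 : (1:ℝ)/c = 2/ε := by rw [hcdef]; field_simp
    rw [h2]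
    have : (2:ℝ)/ε = 1/ε + 1/ε := by ring
    rw [this]
    linarith [htε, h1, hcpos]
  have hmain : S ((t+c:ℝ):EReal) ≤ star Fd S ((t+c+c:ℝ):EReal) + c :=
    hδfP v Fd hF hFδf (t+c) (by linarith) htc
  have hcomp : star Fd S ≤ star Fd L := by
    calc star Fd S = star S Fd := htri.2.1 _ _ hF hS
      _ ≤ star L Fd := htri.2.2.2.2 S L Fd hS hL hF hSle
      _ = star Fd L := (htri.2.1 L Fd hL hF)
  have hrw : ((t+c+c : ℝ):EReal) = ((t+ε:ℝ):EReal) :=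
    congrArg Real.toEReal (by rw [hcdef]; ring)
  rw [hrw] at hmain
  have hfinal := hcomp ((t+ε:ℝ):EReal)
  have hceps : c + c = ε := by rw [hcdef]; ring
  linarith [hbrack, hmain, hfinal]

/-- On a compact probabilistic metric space, pointwise convergence of probabilistic
1-Lipschitz maps to a 1-Lipschitz map implies uniform convergence. -/
theorem stmt16 {K : Type} (M : PMSpace K) (hc : StarContinuous M.star)
    (hcomp : PCompact M) (f : ℕ → K → EReal → ℝ) (hf : ∀ n, PLip M (f n))
    (g : K → EReal → ℝ) (hg : PLip M g)
    (hpt : ∀ x, Tendsto (fun n => dL (f n x) (g x)) atTop (𝓝 0)) :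
    Tendsto (fun n => dInf (f n) g) atTop (𝓝 0) := by
  have htri := M.star_tri
  rcases isEmpty_or_nonempty K with hK | hK
  · have hz : ∀ n, dInf (f n) g = 0 := fun n => Real.iSup_of_isEmpty _
    exact tendsto_const_nhds.congr (fun n => (hz n).symm)
  · rw [Metric.tendsto_atTop]
    intro ε hε
    set η := (min ε 1)/4 with hηdef
    have hmin : 0 < min ε 1 := lt_min hε one_pos
    have hη0 : 0 < η := by rw [hηdef]; positivity
    have hη1 : η < 1 := by
      have := min_le_right ε 1
      rw [hηdef]; linarith
    have hη3 : 3*η < ε := by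
      have h1 := min_le_left ε 1
      rw [hηdef]; linarith
    obtain ⟨δ, hδpos, hδP⟩ := lemA_uniform htri hc hη0 hη1
    have hlip : ∀ (fm : K → EReal → ℝ), PLip M fm → ∀ x y : K,
        1 - δ < M.D x y ((δ:ℝ):EReal) → levyCond (fm x) (fm y) η := by
      intro fm hfm x y hxy t ht htη
      calc fm y (t:EReal) ≤ M.star (M.D x y) (fm y) ((t+η:ℝ):EReal) + η :=
            hδP (M.D x y) (M.D_mem x y) hxy (fm y) (hfm.1 y) t ht htη
        _ ≤ fm x ((t+η:ℝ):EReal) + η := by linarith [hfm.2 x y ((t+η:ℝ):EReal)]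
    have hmemLevy : ∀ (fm : K → EReal → ℝ), PLip M fm → ∀ x y : K,
        1 - δ < M.D x y ((δ:ℝ):EReal) → η ∈ levySet (fm x) (fm y) := by
      intro fm hfm x y hxy
      have hyx : 1 - δ < M.D y x ((δ:ℝ):EReal) := by rw [M.D_symm y x]; exact hxy
      exact ⟨hη0, hη1.le, hlip fm hfm x y hxy, hlip fm hfm y x hyx⟩
    obtain ⟨A, hA⟩ := hcomp.2 δ hδpos
    have hev : ∀ᶠ n in atTop, ∀ a ∈ A, dL (f n a) (g a) < η := by
      rw [Filter.eventually_all_finset]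
      exact fun a _ => (hpt a).eventually (eventually_lt_nhds hη0)
    rw [Filter.eventually_atTop] at hev
    obtain ⟨N, hN⟩ := hev
    refine ⟨N, fun n hn => ?_⟩
    have hbound : ∀ x : K, dL (f n x) (g x) ≤ 3*η := by
      intro x
      obtain ⟨a, haA, hax⟩ := hA x
      have hax' : 1 - δ < M.D a x ((δ:ℝ):EReal) := hax
      have hxa : 1 - δ < M.D x a ((δ:ℝ):EReal) := by rw [M.D_symm x a]; exact hax'
      have h1 : dL (f n x) (f n a) ≤ η := dL_le_of_mem (hmemLevy (f n) (hf n) x a hxa)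
      have h2 : dL (f n a) (g a) ≤ η := (hN n hn a haA).le
      have h3 : dL (g a) (g x) ≤ η := dL_le_of_mem (hmemLevy g hg a x hax')
      have t1 : dL (f n x) (g x) ≤ dL (f n x) (f n a) + dL (f n a) (g x) :=
        dL_triangle ((hf n).1 x) ((hf n).1 a) (hg.1 x)
      have t2 : dL (f n a) (g x) ≤ dL (f n a) (g a) + dL (g a) (g x) :=
        dL_triangle ((hf n).1 a) (hg.1 a) (hg.1 x)
      linarith
    have hsup : dInf (f n) g ≤ 3*η := ciSup_le hbound
    have hnn : 0 ≤ dInf (f n) g := Real.iSup_nonneg (fun x => dL_nonneg)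
    rw [Real.dist_eq, sub_zero, abs_of_nonneg hnn]
    linarith
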